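/- Let ll be an ll operation, let k : ℕ, let i : Fin k, and let t, s : Fin k → ℚ be tuples such that t i < t j for all j ≠ i. Then there exist order-automorphisms α and β of ℚ such that the tuple t'' defined by t'' j = α (ll (β (t j)) (s j)) satisfies t'' j = s j for all j ≠ i, and t'' i < s j for all j ≠ i. -/

import Mathlib

/-- An ll operation on ℚ. -/
def IsLL (f : ℚ → ℚ → ℚ) : Prop :=
  ∀ a a' b b' : ℚ, f a b < f a' b' ↔
    ((a ≤ 0 ∧ a < a') ∨ (a = a' ∧ a ≤ 0 ∧ b < b') ∨ (0 < a ∧ 0 < a' ∧ b < b'))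

/-- Gluing two order automorphisms that agree at a point. -/
lemma glue_auto (f g : ℚ → ℚ) (hf : StrictMono f) (hfb : Function.Bijective f)
    (hg : StrictMono g) (hgb : Function.Bijective g) (a : ℚ) (hfg : f a = g a) :
    StrictMono (fun x => if x ≤ a then f x else g x) ∧
    Function.Bijective (fun x => if x ≤ a then f x else g x) := by
  have hmono : StrictMono (fun x => if x ≤ a then f x else g x) := by
    intro x y hxy
    by_cases hx : x ≤ a <;> by_cases hy : y ≤ a <;> simp only [hx, hy, if_true, if_false]
    · exact hf hxy
    · calc f x ≤ f a := hf.monotone hx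
        _ = g a := hfg
        _ < g y := hg (not_le.1 hy)
    · exact absurd (hxy.trans_le hy) (not_lt.2 (not_le.1 hx).le)
    · exact hg hxy
  refine ⟨hmono, hmono.injective, ?_⟩
  intro z
  by_cases hz : z ≤ f a
  · obtain ⟨x, hx⟩ := hfb.2 z
    have : x ≤ a := (hf.le_iff_le).1 (hx ▸ hz)
    exact ⟨x, by simp [this, hx]⟩
  · obtain ⟨x, hx⟩ := hgb.2 z
    have : ¬ x ≤ a := by
      intro h
      apply hz
      rw [← hx, hfg]
      exact hg.monotone h
    exact ⟨x, by simp [this, hx]⟩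

lemma affine_auto (c p m : ℚ) (hm : 0 < m) :
    StrictMono (fun x => c + (x - p) * m) ∧ Function.Bijective (fun x => c + (x - p) * m) := by
  have hmono : StrictMono (fun x => c + (x - p) * m) := by
    intro x y hxy
    have : (x - p) * m < (y - p) * m :=
      mul_lt_mul_of_pos_right (by linarith) hm
    simpa using this
  refine ⟨hmono, hmono.injective, fun z => ⟨p + (z - c) / m, ?_⟩⟩
  field_simp
  ring

lemma extend_list (L : List (ℚ × ℚ))
    (h : L.Pairwise (fun p q => p.1 < q.1 ∧ p.2 < q.2)) :
    ∃ α : ℚ → ℚ, StrictMono α ∧ Function.Bijective α ∧ ∀ p ∈ L, α p.1 = p.2 := by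
  induction L with
  | nil => exact ⟨id, strictMono_id, Function.bijective_id, by simp⟩
  | cons p tail ih =>
    rcases List.pairwise_cons.1 h with ⟨hp, htail⟩
    cases tail with
    | nil =>
      obtain ⟨h1, h2⟩ := affine_auto p.2 p.1 1 one_pos
      exact ⟨_, h1, h2, by simp⟩
    | cons q rest =>
      obtain ⟨α', hα'm, hα'b, hα'v⟩ := ih htail
      obtain ⟨hx, hy⟩ := hp q (by simp)
      have hxne : q.1 - p.1 > 0 := by linarith
      -- left translation
      obtain ⟨hlm, hlb⟩ := affine_auto p.2 p.1 1 one_pos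
      -- middle affine through p and q
      obtain ⟨hmm, hmb⟩ := affine_auto p.2 p.1 ((q.2 - p.2) / (q.1 - p.1))
        (div_pos (by linarith) hxne)
      set l : ℚ → ℚ := fun x => p.2 + (x - p.1) * 1 with hl
      set m : ℚ → ℚ := fun x => p.2 + (x - p.1) * ((q.2 - p.2) / (q.1 - p.1)) with hm
      have hlam : l p.1 = m p.1 := by simp [hl, hm]
      obtain ⟨h1m, h1b⟩ := glue_auto l m hlm hlb hmm hmb p.1 hlam
      set h1 : ℚ → ℚ := fun x => if x ≤ p.1 then l x else m x with hh1
      have hmq : m q.1 = q.2 := by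
        simp only [hm]
        field_simp
        ring
      have hq2 : α' q.1 = q.2 := hα'v q (by simp)
      have hglue2 : h1 q.1 = α' q.1 := by
        simp only [hh1, if_neg (not_le.2 hx)]
        rw [hmq, hq2]
      obtain ⟨hαm, hαb⟩ := glue_auto h1 α' h1m h1b hα'm hα'b q.1 hglue2
      refine ⟨_, hαm, hαb, ?_⟩
      intro r hr
      rcases List.mem_cons.1 hr with rfl | hr
      · simp [hh1, hl, le_of_lt hx]
      · rcases List.mem_cons.1 hr with rfl | hr
        · simp only [le_refl, if_pos]
          rw [hglue2, hq2]
        · have hlt : q.1 < r.1 := ((List.pairwise_cons.1 htail).1 r hr).1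
          simp only [if_neg (not_le.2 hlt)]
          exact hα'v r (by simp [hr])

/-- If the `i`-th entry of `t` is strictly minimal, then there are order-automorphisms
`α, β` of ℚ such that the tuple `t'' j = α (ll (β (t j)) (s j))` agrees with `s` outside
of `i` and its `i`-th entry is strictly smaller than all `s j` for `j ≠ i`. -/
theorem ll_strictly_minimal_combination (ll : ℚ → ℚ → ℚ) (hll : IsLL ll)
    (k : ℕ) (i : Fin k) (t s : Fin k → ℚ) (ht : ∀ j, j ≠ i → t i < t j) :
    ∃ α β : ℚ → ℚ,
      StrictMono α ∧ Function.Bijective α ∧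
      StrictMono β ∧ Function.Bijective β ∧
      (∀ j, j ≠ i → α (ll (β (t j)) (s j)) = s j) ∧
      (∀ j, j ≠ i → α (ll (β (t i)) (s i)) < s j) := by
  -- key facts about ll
  have hpos : ∀ a b : ℚ, 0 < a → ll a b = ll 1 b := by
    intro a b ha
    refine le_antisymm (not_lt.1 fun h => ?_) (not_lt.1 fun h => ?_) <;>
      rw [hll] at h <;>
      rcases h with ⟨h1, h2⟩ | ⟨h1, h2, h3⟩ | ⟨h1, h2, h3⟩ <;> linarith
  set g : ℚ → ℚ := fun b => ll 1 b with hg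
  have hgmono : StrictMono g := by
    intro b b' hb
    rw [hg]
    simp only
    rw [hll]
    exact Or.inr (Or.inr ⟨one_pos, one_pos, hb⟩)
  set v : ℚ := ll 0 (s i) with hv
  have hvlt : ∀ b, v < g b := by
    intro b
    rw [hv, hg]
    simp only
    rw [hll]
    exact Or.inl ⟨le_refl 0, one_pos⟩
  -- β is translation by - t i
  obtain ⟨hβm, hβb⟩ := affine_auto 0 (t i) 1 one_pos
  set β : ℚ → ℚ := fun x => 0 + (x - t i) * 1 with hβ
  have hβi : β (t i) = 0 := by simp [hβ]
  have hβj : ∀ j, j ≠ i → 0 < β (t j) := by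
    intro j hj
    have := ht j hj
    simp only [hβ]
    linarith
  -- the finite data for α
  set S : Finset ℚ := (Finset.univ.erase i).image s with hS
  set lst := S.sort (· ≤ ·) with hlst
  set m : ℚ := if h : S.Nonempty then S.min' h - 1 else 0 with hmdef
  have hmemS : ∀ j, j ≠ i → s j ∈ S := by
    intro j hj
    exact Finset.mem_image.2 ⟨j, Finset.mem_erase.2 ⟨hj, Finset.mem_univ j⟩, rfl⟩
  have hmlt : ∀ b ∈ S, m < b := by
    intro b hb
    have hne : S.Nonempty := ⟨b, hb⟩
    rw [hmdef, dif_pos hne]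
    have := S.min'_le b hb
    linarith
  set L : List (ℚ × ℚ) := (v, m) :: lst.map (fun b => (g b, b)) with hL
  have hpair : L.Pairwise (fun p q => p.1 < q.1 ∧ p.2 < q.2) := by
    rw [hL]
    refine List.pairwise_cons.2 ⟨?_, ?_⟩
    · intro r hr
      obtain ⟨b, hb, rfl⟩ := List.mem_map.1 hr
      exact ⟨hvlt b, hmlt b ((Finset.mem_sort _).1 hb)⟩
    · refine List.Pairwise.map _ ?_ (Finset.sortedLT_sort S).pairwise
      intro a b hab
      exact ⟨hgmono hab, hab⟩
  obtain ⟨α, hαm, hαb, hαv⟩ := extend_list L hpair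
  have hαS : ∀ b ∈ S, α (g b) = b := by
    intro b hb
    exact hαv (g b, b) (List.mem_cons.2 (Or.inr
      (List.mem_map.2 ⟨b, (Finset.mem_sort _).2 hb, rfl⟩)))
  have hαv' : α v = m := hαv (v, m) (List.mem_cons.2 (Or.inl rfl))
  refine ⟨α, β, hαm, hαb, hβm, hβb, ?_, ?_⟩
  · intro j hj
    rw [hpos _ _ (hβj j hj)]
    exact hαS (s j) (hmemS j hj)
  · intro j hj
    rw [hβi, ← hv, hαv']
    have := hmlt (s j) (hmemS j hj)
    linarith
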